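/- Assume ūB(0) > ūA(0), ūA(1) > ūB(1), the set E = {y ∈ [0,1] : ūA(y) = ūB(y)} is finite, and at every q ∈ E the function ūA − ūB changes sign. Call a point x₀ ∈ 𝒳_s recurrent if there exists a Carathéodory solution x of the continuous-time imitation population dynamics with x(0) = x₀ such that x₀ ∈ ⋂_{t ≥ 0} closure(x([t, ∞))). Then the set of recurrent points equals the finite set {qρ : q ∈ {0,1} ∪ E}; consequently the Birkhoff center (the closure of the set of recurrent points) equals {qρ : q ∈ {0,1} ∪ E}, the set of equilibria of the dynamics. -/

import Mathlib

open scoped Classical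
open MeasureTheory Filter Set

/-- The state space `ℝ^p`, with the Euclidean norm. -/
abbrev Vec (p : ℕ) := EuclideanSpace ℝ (Fin p)

/-- Maximum of finitely many polynomial utilities at `y`. -/
noncomputable def ubar {p : ℕ} (u : Fin p → Polynomial ℝ) (y : ℝ) : ℝ :=
  ⨆ i, (u i).eval y

/-- The total proportion of `A`-players: `σ(x) = Σ_i x_i`. -/
noncomputable def sigma' {p : ℕ} (x : Vec p) : ℝ := ∑ i, x i

/-- The state space `𝒳_s = ∏_i [0, ρ_i]`. -/
def Xs {p : ℕ} (ρ : Vec p) : Set (Vec p) := {x | ∀ i, x i ∈ Set.Icc 0 (ρ i)}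

/-- The set-valued map of the continuous-time imitation population dynamics. -/
noncomputable def Vmap {p : ℕ} (ρ : Vec p) (uA uB : Fin p → Polynomial ℝ)
    (x : Vec p) : Set (Vec p) :=
  if x ∈ interior (Xs ρ) ∧ ubar uB (sigma' x) < ubar uA (sigma' x) then {ρ - x}
  else if x ∈ interior (Xs ρ) ∧ ubar uA (sigma' x) < ubar uB (sigma' x) then {-x}
  else segment ℝ (ρ - x) (-x)

/-- A Carathéodory solution of the continuous-time imitation population dynamics on `[0,∞)`:
a locally absolutely continuous `𝒳_s`-valued function whose derivative lies in `Vmap`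
almost everywhere, expressed in integral form. -/
def IsPopSol {p : ℕ} (ρ : Vec p) (uA uB : Fin p → Polynomial ℝ) (x : ℝ → Vec p) : Prop :=
  (∀ t, 0 ≤ t → x t ∈ Xs ρ) ∧
  ∃ v : ℝ → Vec p,
    (∀ᵐ t ∂(MeasureTheory.volume.restrict (Set.Ici (0:ℝ))), v t ∈ Vmap ρ uA uB (x t)) ∧
    (∀ t, 0 ≤ t → IntervalIntegrable v MeasureTheory.volume 0 t) ∧
    (∀ t, 0 ≤ t → x t = x 0 + ∫ s in (0:ℝ)..t, v s)

/-- The equilibrium set `E = {y ∈ [0,1] : ūA(y) = ūB(y)}`. -/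
noncomputable def Eset {p : ℕ} (uA uB : Fin p → Polynomial ℝ) : Set ℝ :=
  {y ∈ Set.Icc (0:ℝ) 1 | ubar uA y = ubar uB y}

/-- `ūA − ūB` changes sign at `q`. -/
def SignChange {p : ℕ} (uA uB : Fin p → Polynomial ℝ) (q : ℝ) : Prop :=
  ∃ ε > 0,
    ((∀ y ∈ Set.Ioo (q - ε) q ∩ Set.Icc (0:ℝ) 1, ubar uB y < ubar uA y) ∧
     (∀ y ∈ Set.Ioo q (q + ε) ∩ Set.Icc (0:ℝ) 1, ubar uA y < ubar uB y)) ∨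
    ((∀ y ∈ Set.Ioo (q - ε) q ∩ Set.Icc (0:ℝ) 1, ubar uA y < ubar uB y) ∧
     (∀ y ∈ Set.Ioo q (q + ε) ∩ Set.Icc (0:ℝ) 1, ubar uB y < ubar uA y))

/-- `x₀` is a recurrent point of the continuous-time imitation population dynamics:
some Carathéodory solution starting at `x₀` has `x₀` in its limit set. -/
def Recurrent {p : ℕ} (ρ : Vec p) (uA uB : Fin p → Polynomial ℝ) (x₀ : Vec p) : Prop :=
  ∃ x : ℝ → Vec p, IsPopSol ρ uA uB x ∧ x 0 = x₀ ∧
    x₀ ∈ ⋂ t ∈ Set.Ici (0:ℝ), closure (x '' Set.Ici t)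

open Topology
section Aux

lemma abs_coord_le_norm {p : ℕ} (y : Vec p) (i : Fin p) : |y i| ≤ ‖y‖ := by
  rw [EuclideanSpace.norm_eq, ← Real.sqrt_sq_eq_abs]
  apply Real.sqrt_le_sqrt
  have := Finset.single_le_sum (f := fun j => ‖y j‖ ^ 2) (fun j _ => by positivity)
    (Finset.mem_univ i)
  simpa [Real.norm_eq_abs, sq_abs] using this

noncomputable def Lsum (p : ℕ) : Vec p →L[ℝ] ℝ := ∑ i, EuclideanSpace.proj i

lemma Lsum_apply {p : ℕ} (x : Vec p) : Lsum p x = ∑ i, x i := by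
  simp [Lsum, ContinuousLinearMap.sum_apply]

lemma sigma'_eq_Lsum {p : ℕ} (x : Vec p) : sigma' x = Lsum p x := by
  rw [Lsum_apply]; rfl

lemma continuous_ubar {p : ℕ} (hp : 0 < p) (u : Fin p → Polynomial ℝ) :
    Continuous (ubar u) := by
  have : Nonempty (Fin p) := ⟨⟨0, hp⟩⟩
  have h : ubar u = fun y => Finset.univ.sup' Finset.univ_nonempty
      (fun i => (u i).eval y) := by
    funext y
    rw [Finset.sup'_univ_eq_ciSup]
    rfl
  rw [h]
  exact Continuous.finset_sup'_apply _ (fun i _ => (u i).continuous_aeval)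

lemma mem_interior_Xs {p : ℕ} {ρ : Vec p} {z : Vec p}
    (hz : ∀ i, z i ∈ Ioo 0 (ρ i)) : z ∈ interior (Xs ρ) := by
  have hopen : IsOpen {y : Vec p | ∀ i, y i ∈ Ioo 0 (ρ i)} := by
    have : {y : Vec p | ∀ i, y i ∈ Ioo 0 (ρ i)}
        = ⋂ i, (EuclideanSpace.proj (𝕜 := ℝ) i) ⁻¹' (Ioo 0 (ρ i)) := by
      ext y; simp [PiLp.proj_apply]
    rw [this]
    exact isOpen_iInter_of_finite fun i =>
      isOpen_Ioo.preimage (EuclideanSpace.proj i).continuous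
  have hsub : {y : Vec p | ∀ i, y i ∈ Ioo 0 (ρ i)} ⊆ Xs ρ :=
    fun y hy i => ⟨(hy i).1.le, (hy i).2.le⟩
  exact interior_maximal hsub hopen hz

lemma zero_not_interior_Xs {p : ℕ} (hp : 0 < p) (ρ : Vec p) :
    (0 : Vec p) ∉ interior (Xs ρ) := by
  intro hmem
  obtain ⟨ε, hε, hball⟩ := Metric.isOpen_iff.1 isOpen_interior 0 hmem
  set i0 : Fin p := ⟨0, hp⟩
  set z : Vec p := (-(ε/2)) • EuclideanSpace.single i0 (1:ℝ) with hz
  have hznorm : ‖z - 0‖ < ε := by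
    rw [sub_zero, hz, norm_smul, EuclideanSpace.norm_single]
    simp [abs_of_pos hε]
    linarith
  have hzXs : z ∈ Xs ρ := interior_subset (hball (by simpa [dist_eq_norm] using hznorm))
  have := (hzXs i0).1
  rw [hz] at this
  simp [EuclideanSpace.single_apply] at this
  linarith

lemma rho_not_interior_Xs {p : ℕ} (hp : 0 < p) (ρ : Vec p) :
    ρ ∉ interior (Xs ρ) := by
  intro hmem
  obtain ⟨ε, hε, hball⟩ := Metric.isOpen_iff.1 isOpen_interior ρ hmem
  set i0 : Fin p := ⟨0, hp⟩
  set z : Vec p := ρ + (ε/2) • EuclideanSpace.single i0 (1:ℝ) with hz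
  have hznorm : ‖z - ρ‖ < ε := by
    rw [hz, add_sub_cancel_left, norm_smul, EuclideanSpace.norm_single]
    simp [abs_of_pos hε]
    linarith
  have hzXs : z ∈ Xs ρ := interior_subset (hball (by simpa [dist_eq_norm] using hznorm))
  have := (hzXs i0).2
  rw [hz] at this
  simp [EuclideanSpace.single_apply] at this
  linarith

/-- endpoint bound from `Ico` bound by continuity -/
lemma le_endpoint_of_Ico {s : ℝ → ℝ} {u w r : ℝ} (huw : u ≤ w)
    (hcont : ContinuousOn s (Icc u w)) (h : ∀ τ ∈ Ico u w, r ≤ s τ) (hu : r ≤ s u) :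
    r ≤ s w := by
  rcases eq_or_lt_of_le huw with rfl | hlt
  · exact hu
  · have hclosed : IsClosed {τ ∈ Icc u w | r ≤ s τ} :=
      hcont.preimage_isClosed_of_isClosed isClosed_Icc isClosed_Ici
    have hsub : Ico u w ⊆ {τ ∈ Icc u w | r ≤ s τ} := fun τ hτ =>
      ⟨⟨hτ.1, hτ.2.le⟩, h τ hτ⟩
    have h2 : Icc u w ⊆ {τ ∈ Icc u w | r ≤ s τ} := by
      have := hclosed.closure_subset_iff.2 hsub
      rwa [closure_Ico hlt.ne] at this
    exact (h2 ⟨huw, le_refl w⟩).2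

/-- there is a point just to the right where `s` stays large -/
lemma exists_right_near {s : ℝ → ℝ} {a t₃ t₄ r : ℝ} (hcont : ContinuousOn s (Ici a))
    (h3 : a ≤ t₃) (h34 : t₃ < t₄) (hr : r < s t₃) :
    ∃ u, t₃ < u ∧ u ≤ t₄ ∧ r < s u := by
  have cwa : ContinuousWithinAt s (Ioi t₃) t₃ :=
    (hcont t₃ h3).mono (fun τ hτ => le_trans h3 (le_of_lt hτ))
  have ev1 : ∀ᶠ u in nhdsWithin t₃ (Ioi t₃), r < s u :=
    cwa.eventually (eventually_gt_nhds hr)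
  have ev2 : ∀ᶠ u in nhdsWithin t₃ (Ioi t₃), u ≤ t₄ :=
    eventually_nhdsWithin_of_eventually_nhds
      ((eventually_lt_nhds h34).mono (fun u hu => le_of_lt hu))
  obtain ⟨u, hu1, hu2⟩ := ((ev1.and ev2).and self_mem_nhdsWithin).exists
  exact ⟨u, hu2, hu1.2, hu1.1⟩

end Aux

/-- once `s` reaches `q+3δ/4`, it stays above `q+δ/2` -/
lemma up2 {s : ℝ → ℝ} {q δ c a t₁ : ℝ} (hδ : 0 < δ) (hc : 0 < c)
    (hcont : ContinuousOn s (Ici a)) (ha1 : a ≤ t₁)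
    (H : ∀ u w, a ≤ u → u ≤ w → (∀ τ ∈ Icc u w, s τ ∈ Icc (q - δ) (q + δ)) →
      c * (w - u) ≤ s w - s u)
    (h1 : q + 3*δ/4 ≤ s t₁) :
    ∀ t₂, t₁ ≤ t₂ → q + δ/2 < s t₂ := by
  intro t₂ h12
  by_contra hcon
  push_neg at hcon
  -- t₃ : last time in [t₁,t₂] with s ≥ q+3δ/4
  set A := {τ ∈ Icc t₁ t₂ | q + 3*δ/4 ≤ s τ} with hA
  have hAne : A.Nonempty := ⟨t₁, ⟨le_refl _, h12⟩, h1⟩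
  have hAbdd : BddAbove A := BddAbove.mono (fun τ hτ => hτ.1) bddAbove_Icc
  have hAclosed : IsClosed A :=
    ((hcont.mono (Icc_subset_Ici_self.trans (Ici_subset_Ici.2 ha1))).preimage_isClosed_of_isClosed
      isClosed_Icc isClosed_Ici)
  have ht₃A : sSup A ∈ A := hAclosed.csSup_mem hAne hAbdd
  set t₃ := sSup A with ht₃
  obtain ⟨⟨h13, h32⟩, h3v⟩ := ht₃A
  have h32' : t₃ < t₂ := lt_of_le_of_ne h32 (by
    intro h; rw [h] at h3v; linarith)
  have hup : ∀ τ, t₃ < τ → τ ≤ t₂ → s τ < q + 3*δ/4 := by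
    intro τ h3τ hτ2
    by_contra hge
    push_neg at hge
    exact absurd (le_csSup hAbdd (⟨⟨h13.trans h3τ.le, hτ2⟩, hge⟩ : τ ∈ A)) (not_le.2 h3τ)
  -- t₄ : first time in [t₃,t₂] with s ≤ q+δ/2
  set B := {τ ∈ Icc t₃ t₂ | s τ ≤ q + δ/2} with hB
  have hBne : B.Nonempty := ⟨t₂, ⟨h32, le_refl _⟩, hcon⟩
  have hBbdd : BddBelow B := BddBelow.mono (fun τ hτ => hτ.1) bddBelow_Icc
  have hBclosed : IsClosed B :=
    ((hcont.mono (Icc_subset_Ici_self.trans (Ici_subset_Ici.2 (ha1.trans h13)))).preimage_isClosed_of_isClosed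
      isClosed_Icc isClosed_Iic)
  have ht₄B : sInf B ∈ B := hBclosed.csInf_mem hBne hBbdd
  set t₄ := sInf B with ht₄
  obtain ⟨⟨h34, h42⟩, h4v⟩ := ht₄B
  have h34' : t₃ < t₄ := lt_of_le_of_ne h34 (by
    intro h; rw [← h] at h4v; linarith)
  have hlow : ∀ τ, t₃ ≤ τ → τ < t₄ → q + δ/2 < s τ := by
    intro τ h3τ hτ4
    by_contra hle
    push_neg at hle
    exact absurd (csInf_le hBbdd (⟨⟨h3τ, hτ4.le.trans h42⟩, hle⟩ : τ ∈ B)) (not_le.2 hτ4)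
  -- pick u just right of t3 with s u > q + 5d/8
  obtain ⟨u, h3u, hu4, hu⟩ := exists_right_near hcont (ha1.trans h13) h34'
    (show q + 5*δ/8 < s t₃ by linarith)
  have hu4' : u < t₄ := lt_of_le_of_ne hu4 (by intro h; rw [h] at hu; linarith)
  have hau : a ≤ u := (ha1.trans h13).trans h3u.le
  -- band on [u, t4]
  have hband : ∀ τ ∈ Icc u t₄, s τ ∈ Icc (q - δ) (q + δ) := by
    rintro τ ⟨huτ, hτ4⟩
    rcases eq_or_lt_of_le hτ4 with heq | hτ4'
    · have h5 : q + δ/2 ≤ s t₄ := by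
        apply le_endpoint_of_Ico hu4
          (hcont.mono (Icc_subset_Ici_self.trans (Ici_subset_Ici.2 hau)))
        · exact fun σ hσ => (hlow σ (h3u.le.trans hσ.1) hσ.2).le
        · exact (hlow u h3u.le hu4').le
      rw [heq]
      constructor <;> [linarith; linarith]
    · constructor
      · have := hlow τ (h3u.le.trans huτ) hτ4'
        linarith
      · have := hup τ (h3u.trans_le huτ) (hτ4'.le.trans h42)
        linarith
  have hH := H u t₄ hau hu4 hband
  have hnn : 0 ≤ c * (t₄ - u) := mul_nonneg hc.le (by linarith)
  linarith

lemma up1 {s : ℝ → ℝ} {q δ c a : ℝ} (hδ : 0 < δ) (hc : 0 < c)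
    (hcont : ContinuousOn s (Ici a))
    (H : ∀ u w, a ≤ u → u ≤ w → (∀ τ ∈ Icc u w, s τ ∈ Icc (q - δ) (q + δ)) →
      c * (w - u) ≤ s w - s u)
    (ha : q - δ/2 ≤ s a) :
    ∃ t₁ ∈ Icc a (a + 2*δ/c), q + 3*δ/4 ≤ s t₁ := by
  by_contra hcon
  push_neg at hcon
  obtain ⟨b, hb⟩ : ∃ b, b = a + 2*δ/c := ⟨_, rfl⟩
  rw [← hb] at hcon
  have hab : a ≤ b := by
    have h9 : 0 < 2*δ/c := by positivity
    linarith
  have hup : ∀ τ ∈ Icc a b, s τ < q + 3*δ/4 := fun τ hτ => hcon τ hτ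
  have hlowAll : ∀ τ ∈ Icc a b, q - δ < s τ := by
    by_contra hcon2
    push_neg at hcon2
    obtain ⟨t₀, ht₀, ht₀v⟩ := hcon2
    have hB : True := trivial
    set B := {τ ∈ Icc a b | s τ ≤ q - δ} with hBdef
    have hBne : B.Nonempty := ⟨t₀, ht₀, ht₀v⟩
    have hBbdd : BddBelow B := BddBelow.mono (fun τ hτ => hτ.1) bddBelow_Icc
    have hBclosed : IsClosed B :=
      (hcont.mono Icc_subset_Ici_self).preimage_isClosed_of_isClosed isClosed_Icc isClosed_Iic
    have ht₄B : sInf B ∈ B := hBclosed.csInf_mem hBne hBbdd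
    set t₄ := sInf B with ht₄
    obtain ⟨⟨ha4, h4b⟩, h4v⟩ := ht₄B
    have ha4' : a < t₄ := lt_of_le_of_ne ha4 (by intro h; rw [← h] at h4v; linarith)
    have hlow : ∀ τ, a ≤ τ → τ < t₄ → q - δ < s τ := by
      intro τ haτ hτ4
      by_contra hle
      push_neg at hle
      exact absurd (csInf_le hBbdd (⟨⟨haτ, hτ4.le.trans h4b⟩, hle⟩ : τ ∈ B))
        (not_le.2 hτ4)
    have hband : ∀ τ ∈ Icc a t₄, s τ ∈ Icc (q - δ) (q + δ) := by
      rintro τ ⟨haτ, hτ4⟩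
      refine ⟨?_, (hup τ ⟨haτ, hτ4.trans h4b⟩).le.trans (by linarith)⟩
      rcases eq_or_lt_of_le hτ4 with heq | hτ4'
      · rw [heq]
        apply le_endpoint_of_Ico ha4 (hcont.mono
          (Icc_subset_Ici_self.trans (Ici_subset_Ici.2 (le_refl a))))
        · exact fun σ hσ => (hlow σ hσ.1 hσ.2).le
        · linarith
      · exact (hlow τ haτ hτ4').le
    have hH := H a t₄ (le_refl a) ha4 hband
    have hnn : 0 ≤ c * (t₄ - a) := mul_nonneg hc.le (by linarith)
    linarith
  have hband : ∀ τ ∈ Icc a b, s τ ∈ Icc (q - δ) (q + δ) := fun τ hτ =>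
    ⟨(hlowAll τ hτ).le, (hup τ hτ).le.trans (by linarith)⟩
  have hH := H a b (le_refl a) hab hband
  have hcb : c * (b - a) = 2*δ := by
    rw [hb]; field_simp; ring
  have := hup b ⟨hab, le_refl b⟩
  linarith

lemma barrier {s : ℝ → ℝ} {q δ c a : ℝ} (hδ : 0 < δ) (hc : 0 < c)
    (hcont : ContinuousOn s (Ici a))
    (H : ∀ u w, a ≤ u → u ≤ w → (∀ τ ∈ Icc u w, s τ ∈ Icc (q - δ) (q + δ)) →
      c * (w - u) ≤ s w - s u)
    (ha : q - δ/2 ≤ s a) :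
    ∀ t, a + 2*δ/c ≤ t → q + δ/2 < s t := by
  intro t ht
  obtain ⟨t₁, ⟨hat₁, ht₁b⟩, ht₁v⟩ := up1 hδ hc hcont H ha
  exact up2 (t₁ := t₁) hδ hc hcont hat₁ H ht₁v t (ht₁b.trans ht)

section ED
variable {E : Type*} [NormedAddCommGroup E] [NormedSpace ℝ E] [CompleteSpace E]

lemma exp_decay_of_integral_eq {w : ℝ → E}
    (hcont : ContinuousOn w (Ici 0))
    (hw : ∀ t, 0 ≤ t → w t = w 0 - ∫ τ in (0:ℝ)..t, w τ) :
    ∀ t, 0 ≤ t → w t = Real.exp (-t) • w 0 := by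
  intro b hb
  have hint : ∀ t, 0 ≤ t → IntervalIntegrable w volume 0 t := by
    intro t ht
    apply ContinuousOn.intervalIntegrable
    apply hcont.mono
    rw [uIcc_of_le ht]
    exact Icc_subset_Ici_self
  have hderiv : ∀ t ∈ Ico (0:ℝ) b,
      HasDerivWithinAt (fun τ => Real.exp τ • w τ) 0 (Ici t) t := by
    intro t ht
    have hFder : HasDerivWithinAt (fun τ => ∫ σ in (0:ℝ)..τ, w σ) (w t) (Ici t) t := by
      apply intervalIntegral.integral_hasDerivWithinAt_right (hint t ht.1)
        (((hcont.mono (Ici_subset_Ici.2 ht.1)).stronglyMeasurableAtFilter_nhdsWithin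
          measurableSet_Ici t).filter_mono (nhdsWithin_mono t Ioi_subset_Ici_self))
      exact (hcont t ht.1).mono (fun y hy => le_trans ht.1 (le_of_lt hy))
    have hwder : HasDerivWithinAt w (-(w t)) (Ici t) t := by
      have h1 : HasDerivWithinAt (fun τ => w 0 - ∫ σ in (0:ℝ)..τ, w σ) (-(w t)) (Ici t) t :=
        hFder.const_sub (w 0)
      exact h1.congr (fun y hy => hw y (le_trans ht.1 hy)) (hw t ht.1)
    have hexp : HasDerivWithinAt Real.exp (Real.exp t) (Ici t) t :=
      (Real.hasDerivAt_exp t).hasDerivWithinAt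
    have : HasDerivWithinAt (fun τ => Real.exp τ • w τ) (Real.exp t • -w t + Real.exp t • w t) (Ici t) t := hexp.smul hwder
    convert this using 1
    simp [smul_neg]
  have hcontG : ContinuousOn (fun τ => Real.exp τ • w τ) (Icc 0 b) :=
    (Real.continuous_exp.continuousOn).smul (hcont.mono Icc_subset_Ici_self)
  have hconst := constant_of_has_deriv_right_zero hcontG hderiv b ⟨hb, le_refl b⟩
  have : Real.exp b • w b = Real.exp 0 • w 0 := hconst
  rw [Real.exp_zero, one_smul] at this
  have h2 : w b = (Real.exp b)⁻¹ • w 0 := by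
    rw [← this, inv_smul_smul₀ (Real.exp_ne_zero b)]
  rw [h2, ← Real.exp_neg]

lemma contOn_primitive {v : ℝ → E} (hv : ∀ t, 0 ≤ t → IntervalIntegrable v volume 0 t) :
    ContinuousOn (fun t => ∫ τ in (0:ℝ)..t, v τ) (Ici 0) := by
  intro t ht
  have h1 : ContinuousOn (fun t => ∫ τ in (0:ℝ)..t, v τ) (uIcc 0 (t+1)) :=
    intervalIntegral.continuousOn_primitive_interval' (hv (t+1) (by linarith [ht.out]))
      left_mem_uIcc
  rw [uIcc_of_le (by linarith [ht.out] : (0:ℝ) ≤ t + 1)] at h1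
  apply (h1 t ⟨ht, by linarith⟩).mono_of_mem_nhdsWithin
  have h2 : Iic (t+1) ∈ nhdsWithin t (Ici 0) :=
    mem_nhdsWithin_of_mem_nhds (Iic_mem_nhds (by linarith))
  have h3 : Ici (0:ℝ) ∈ nhdsWithin t (Ici 0) := self_mem_nhdsWithin
  have := Filter.inter_mem h3 h2
  rwa [Ici_inter_Iic] at this

end ED

lemma no_recur {s : ℝ → ℝ} {q δ c T : ℝ} (hδ : 0 < δ) (hc : 0 < c) (hT : 0 ≤ T)
    (hcont : ContinuousOn s (Ici 0))
    (H : ∀ u w, T ≤ u → u ≤ w → (∀ τ ∈ Icc u w, s τ ∈ Icc (q - δ) (q + δ)) →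
      c * (w - u) ≤ s w - s u)
    (tn : ℕ → ℝ) (htn : ∀ n : ℕ, (n : ℝ) ≤ tn n)
    (hconv : Tendsto (fun n => s (tn n)) atTop (𝓝 q)) : False := by
  have hev : ∀ᶠ n in atTop, |s (tn n) - q| < δ/2 := by
    have := Metric.tendsto_atTop.1 hconv (δ/2) (by linarith)
    obtain ⟨N, hN⟩ := this
    exact eventually_atTop.2 ⟨N, fun n hn => by
      have := hN n hn; rwa [Real.dist_eq] at this⟩
  obtain ⟨N, hN⟩ := eventually_atTop.1 hev
  set a := tn (max N ⌈T⌉₊) with ha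
  have haT : T ≤ a := le_trans (Nat.le_ceil T) (le_trans
    (by exact_mod_cast Nat.cast_le.2 (le_max_right N ⌈T⌉₊)) (htn (max N ⌈T⌉₊)))
  have ha0 : 0 ≤ a := hT.trans haT
  have haval : |s a - q| < δ/2 := hN _ (le_max_left _ _)
  have hbar := barrier hδ hc (hcont.mono (Ici_subset_Ici.2 ha0))
    (fun u w hu huw hb => H u w (haT.trans hu) huw hb)
    (by rw [abs_lt] at haval; linarith)
  set m := max N ⌈a + 2*δ/c⌉₊ with hm
  have hm1 : a + 2*δ/c ≤ tn m := le_trans (Nat.le_ceil _) (le_trans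
    (by exact_mod_cast Nat.cast_le.2 (le_max_right N ⌈a + 2*δ/c⌉₊)) (htn m))
  have h2 := hbar (tn m) hm1
  have h3 := hN m (le_max_left _ _)
  rw [abs_lt] at h3
  linarith

lemma equil_recurrent {p : ℕ} (hp : 0 < p) (ρ : Vec p) (hρ : ∀ i, 0 < ρ i)
    (hsum : ∑ i, ρ i = 1) (uA uB : Fin p → Polynomial ℝ) (q : ℝ)
    (hq : q ∈ ({0, 1} : Set ℝ) ∪ Eset uA uB) :
    Recurrent ρ uA uB (q • ρ) := by
  have hq01 : 0 ≤ q ∧ q ≤ 1 := by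
    rcases hq with (rfl | rfl) | hqE
    · exact ⟨le_refl 0, zero_le_one⟩
    · exact ⟨zero_le_one, le_refl 1⟩
    · exact ⟨hqE.1.1, hqE.1.2⟩
  have hsig : sigma' (q • ρ) = q := by
    unfold sigma'
    simp only [PiLp.smul_apply, smul_eq_mul]
    rw [← Finset.mul_sum, hsum, mul_one]
  have hv0 : (0 : Vec p) ∈ Vmap ρ uA uB (q • ρ) := by
    rcases hq with (rfl | rfl) | hqE
    · rw [Vmap]
      have hni : (0:ℝ) • ρ ∉ interior (Xs ρ) := by
        rw [zero_smul]; exact zero_not_interior_Xs hp ρ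
      rw [if_neg (fun h => hni h.1), if_neg (fun h => hni h.1)]
      rw [zero_smul, neg_zero, sub_zero]
      exact right_mem_segment ℝ ρ 0
    · rw [Vmap]
      have hni : (1:ℝ) • ρ ∉ interior (Xs ρ) := by
        rw [one_smul]; exact rho_not_interior_Xs hp ρ
      rw [if_neg (fun h => hni h.1), if_neg (fun h => hni h.1)]
      rw [one_smul, sub_self]
      exact left_mem_segment ℝ 0 (-ρ)
    · have heq : ubar uA (sigma' (q • ρ)) = ubar uB (sigma' (q • ρ)) := by
        rw [hsig]; exact hqE.2
      rw [Vmap, if_neg (fun h => absurd h.2 (by rw [heq]; exact lt_irrefl _)),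
        if_neg (fun h => absurd h.2 (by rw [heq]; exact lt_irrefl _))]
      refine ⟨q, 1 - q, hq01.1, by linarith, by ring, ?_⟩
      module
  refine ⟨fun _ => q • ρ, ⟨fun t _ => ?_, fun _ => 0, ?_, ?_, ?_⟩, rfl, ?_⟩
  · intro i
    simp only [PiLp.smul_apply, smul_eq_mul]
    constructor
    · exact mul_nonneg hq01.1 (hρ i).le
    · nlinarith [(hρ i).le, hq01.2]
  · exact Filter.Eventually.of_forall (fun t => hv0)
  · exact fun t _ => intervalIntegrable_const
  · intro t _
    simp
  · rw [mem_iInter₂]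
    intro t _
    exact subset_closure ⟨t, mem_Ici.2 (le_refl t), rfl⟩

lemma recurrent_eq {p : ℕ} (hp : 0 < p) (ρ : Vec p) (hρ : ∀ i, 0 < ρ i)
    (hsum : ∑ i, ρ i = 1) (uA uB : Fin p → Polynomial ℝ) (x₀ : Vec p)
    (hrec : Recurrent ρ uA uB x₀) :
    ∃ q ∈ ({0, 1} : Set ℝ) ∪ Eset uA uB, q • ρ = x₀ := by
  have hne : Nonempty (Fin p) := ⟨⟨0, hp⟩⟩
  obtain ⟨x, ⟨hXs, v, hv_ae, hv_int, hx_eq⟩, hx0, hlim⟩ := hrec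
  have hLρ : Lsum p ρ = 1 := by rw [Lsum_apply]; exact hsum
  -- continuity of x on [0,∞)
  have hxcont : ContinuousOn x (Ici 0) :=
    (continuousOn_const.add (contOn_primitive hv_int)).congr (fun t ht => hx_eq t ht)
  set s : ℝ → ℝ := fun t => Lsum p (x t) with hs_def
  have hscont : ContinuousOn s (Ici 0) := (Lsum p).continuous.comp_continuousOn hxcont
  set g : ℝ → ℝ := fun t => Lsum p (v t) with hg_def
  have hg_int : ∀ t, 0 ≤ t → IntervalIntegrable g volume 0 t := fun t ht =>
    ⟨(Lsum p).integrable_comp (hv_int t ht).1, (Lsum p).integrable_comp (hv_int t ht).2⟩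
  have hs_eq : ∀ t, 0 ≤ t → s t = s 0 + ∫ τ in (0:ℝ)..t, g τ := by
    intro t ht
    have hcomm := (Lsum p).intervalIntegral_comp_comm (hv_int t ht)
    rw [hs_def]
    simp only
    rw [hx_eq t ht, map_add, ← hcomm]
  -- the a.e. segment identity
  have hseg : ∀ᵐ t ∂(volume.restrict (Ici (0:ℝ))),
      v t - g t • ρ = s t • ρ - x t := by
    filter_upwards [hv_ae] with t htv
    have hmem : v t ∈ segment ℝ (ρ - x t) (-(x t)) := by
      rw [Vmap] at htv
      split_ifs at htv with h1 h2
      · rw [mem_singleton_iff] at htv; rw [htv]; exact left_mem_segment ℝ _ _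
      · rw [mem_singleton_iff] at htv; rw [htv]; exact right_mem_segment ℝ _ _
      · exact htv
    obtain ⟨a, b, _, _, hab, hv'⟩ := hmem
    have hvt : v t = a • ρ - x t := by
      rw [← hv']
      have hb : b = 1 - a := by linarith
      rw [hb]; module
    have hgt : g t = a - s t := by
      rw [hg_def]; simp only
      rw [hvt, map_sub, _root_.map_smul, hLρ, smul_eq_mul, mul_one]
    rw [hvt, hgt]
    module
  -- w and its exponential decay
  set w : ℝ → Vec p := fun t => x t - s t • ρ with hw_def
  have hwcont : ContinuousOn w (Ici 0) := hxcont.sub (hscont.smul continuousOn_const)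
  have hw_eq : ∀ t, 0 ≤ t → w t = w 0 - ∫ τ in (0:ℝ)..t, w τ := by
    intro t ht
    have hseg' : ∀ᵐ τ ∂volume, τ ∈ Ici (0:ℝ) → v τ - g τ • ρ = s τ • ρ - x τ :=
      (ae_restrict_iff' measurableSet_Ici).1 hseg
    have h1 : ∫ τ in (0:ℝ)..t, w τ = ∫ τ in (0:ℝ)..t, (g τ • ρ - v τ) := by
      apply intervalIntegral.integral_congr_ae
      filter_upwards [hseg'] with τ hτ hτΙ
      rw [uIoc_of_le ht] at hτΙ
      have := hτ (le_of_lt hτΙ.1)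
      rw [hw_def]; simp only
      have : x τ - s τ • ρ = -(v τ - g τ • ρ) := by rw [this]; abel
      rw [this]; abel
    have hgρ_int : IntervalIntegrable (fun τ => g τ • ρ) volume 0 t :=
      ⟨(hg_int t ht).1.smul_const ρ, (hg_int t ht).2.smul_const ρ⟩
    rw [h1, intervalIntegral.integral_sub hgρ_int (hv_int t ht),
      intervalIntegral.integral_smul_const]
    rw [hw_def]
    simp only
    rw [hx_eq t ht, hs_eq t ht, add_smul]
    abel
  have hwexp : ∀ t, 0 ≤ t → w t = Real.exp (-t) • w 0 :=
    exp_decay_of_integral_eq hwcont hw_eq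
  -- recurrence sequence
  have hseq : ∀ n : ℕ, ∃ t, (n : ℝ) ≤ t ∧ dist x₀ (x t) < 1/(n+1) := by
    intro n
    have hmem : x₀ ∈ closure (x '' Ici (n : ℝ)) := by
      have := (mem_iInter₂.1 hlim) (n : ℝ) (mem_Ici.2 (Nat.cast_nonneg n))
      exact this
    obtain ⟨y, hy, hdy⟩ := Metric.mem_closure_iff.1 hmem (1/(n+1)) (by positivity)
    obtain ⟨t, htI, rfl⟩ := hy
    exact ⟨t, htI, hdy⟩
  choose tn htn1 htn2 using hseq
  have htn0 : ∀ n, (0:ℝ) ≤ tn n := fun n => le_trans (Nat.cast_nonneg n) (htn1 n)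
  have hxconv : Tendsto (fun n => x (tn n)) atTop (𝓝 x₀) := by
    rw [tendsto_iff_dist_tendsto_zero]
    apply squeeze_zero (fun n => dist_nonneg) (fun n => (dist_comm (x (tn n)) x₀) ▸ (htn2 n).le)
    exact tendsto_one_div_add_atTop_nhds_zero_nat
  have htninf : Tendsto tn atTop atTop :=
    tendsto_atTop_mono htn1 tendsto_natCast_atTop_atTop
  set q : ℝ := Lsum p x₀ with hq_def
  have hsconv : Tendsto (fun n => s (tn n)) atTop (𝓝 q) :=
    ((Lsum p).continuous.tendsto x₀).comp hxconv
  -- x₀ = q • ρ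
  have hwconv0 : Tendsto (fun n => w (tn n)) atTop (𝓝 0) := by
    have hbound : Tendsto (fun n => Real.exp (-(tn n)) * ‖w 0‖) atTop (𝓝 0) := by
      have h1 : Tendsto (fun n => Real.exp (-(tn n))) atTop (𝓝 0) :=
        Real.tendsto_exp_atBot.comp (tendsto_neg_atTop_atBot.comp htninf)
      have := h1.mul_const ‖w 0‖
      rwa [zero_mul] at this
    apply squeeze_zero_norm _ hbound
    intro n
    rw [hwexp (tn n) (htn0 n), norm_smul, Real.norm_eq_abs, Real.abs_exp]
  have hwconv : Tendsto (fun n => w (tn n)) atTop (𝓝 (x₀ - q • ρ)) :=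
    hxconv.sub (hsconv.smul_const ρ)
  have hx₀q : x₀ = q • ρ := by
    have := tendsto_nhds_unique hwconv hwconv0
    rwa [sub_eq_zero] at this
  refine ⟨q, ?_, hx₀q.symm⟩
  -- q ∈ [0,1]
  have hx₀Xs : x₀ ∈ Xs ρ := hx0 ▸ hXs 0 (le_refl 0)
  have hq01 : q ∈ Icc (0:ℝ) 1 := by
    rw [hq_def, Lsum_apply]
    constructor
    · exact Finset.sum_nonneg (fun i _ => (hx₀Xs i).1)
    · rw [← hsum]
      exact Finset.sum_le_sum (fun i _ => (hx₀Xs i).2)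
  -- suppose q ∉ {0,1} ∪ E
  by_contra hqE
  simp only [mem_union, mem_insert_iff, mem_singleton_iff, not_or] at hqE
  obtain ⟨⟨hq0, hq1⟩, hqE⟩ := hqE
  have hq0' : 0 < q := lt_of_le_of_ne hq01.1 (Ne.symm hq0)
  have hq1' : q < 1 := lt_of_le_of_ne hq01.2 hq1
  have hqD : ubar uA q ≠ ubar uB q := fun h => hqE ⟨hq01, h⟩
  -- radius of interior ball around q • ρ
  set r := Finset.univ.inf' (Finset.univ_nonempty (α := Fin p))
      (fun i => min (q * ρ i) ((1-q) * ρ i)) with hr_def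
  have hr : 0 < r := by
    rw [hr_def, Finset.lt_inf'_iff]
    intro i _
    exact lt_min (mul_pos hq0' (hρ i)) (mul_pos (by linarith) (hρ i))
  have hball_int : ∀ z : Vec p, ‖z - q • ρ‖ < r → ∀ i, z i ∈ Ioo 0 (ρ i) := by
    intro z hz i
    have h2 := abs_coord_le_norm (z - q • ρ) i
    have h2' : (z - q • ρ) i = z i - q * ρ i := by
      simp [PiLp.sub_apply, PiLp.smul_apply, smul_eq_mul]
    rw [h2'] at h2
    have h1 : |z i - q * ρ i| < r := lt_of_le_of_lt h2 hz
    have h3 : r ≤ min (q * ρ i) ((1-q) * ρ i) :=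
      Finset.inf'_le _ (Finset.mem_univ i)
    have h3a : r ≤ q * ρ i := h3.trans (min_le_left _ _)
    have h3b : r ≤ (1-q) * ρ i := h3.trans (min_le_right _ _)
    have h4 : (1-q) * ρ i = ρ i - q * ρ i := by ring
    rw [abs_lt] at h1
    constructor <;> [linarith; linarith]
  -- time after which w is small
  have hTex : ∃ T0 : ℝ, ∀ t ≥ T0, Real.exp (-t) * ‖w 0‖ < r/2 := by
    have h1 : Tendsto (fun t : ℝ => Real.exp (-t) * ‖w 0‖) atTop (𝓝 0) := by
      have h2 : Tendsto (fun t : ℝ => Real.exp (-t)) atTop (𝓝 0) :=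
        Real.tendsto_exp_atBot.comp tendsto_neg_atTop_atBot
      have := h2.mul_const ‖w 0‖
      rwa [zero_mul] at this
    exact eventually_atTop.1 (h1.eventually (eventually_lt_nhds (by linarith)))
  obtain ⟨T0, hT0⟩ := hTex
  set T := max T0 0 with hT_def
  have hT0' : (0:ℝ) ≤ T := le_max_right _ _
  -- sign stability interval
  have hDcont : Continuous (fun y => ubar uA y - ubar uB y) :=
    (continuous_ubar hp uA).sub (continuous_ubar hp uB)
  -- choose δ
  have hδex : ∀ ε : ℝ, 0 < ε → ∃ δ : ℝ, 0 < δ ∧ δ < ε ∧ δ * ‖ρ‖ ≤ r/2 ∧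
      δ ≤ q/2 ∧ δ ≤ (1-q)/2 := by
    intro ε hε
    refine ⟨min (min (ε/2) (r/(2*(‖ρ‖+1)))) (min (q/2) ((1-q)/2)),
      lt_min (lt_min (by linarith) (by positivity)) (lt_min (by linarith) (by linarith)),
      lt_of_le_of_lt ((min_le_left _ _).trans (min_le_left _ _)) (by linarith), ?_,
      (min_le_right _ _).trans (min_le_left _ _),
      (min_le_right _ _).trans (min_le_right _ _)⟩
    have hδ2 : min (min (ε/2) (r/(2*(‖ρ‖+1)))) (min (q/2) ((1-q)/2))
        ≤ r/(2*(‖ρ‖+1)) := (min_le_left _ _).trans (min_le_right _ _)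
    have hδnn : 0 ≤ min (min (ε/2) (r/(2*(‖ρ‖+1)))) (min (q/2) ((1-q)/2)) :=
      le_of_lt (lt_min (lt_min (by linarith) (by positivity)) (lt_min (by linarith) (by linarith)))
    have hN : (0:ℝ) ≤ ‖ρ‖ := norm_nonneg ρ
    have hmul : min (min (ε/2) (r/(2*(‖ρ‖+1)))) (min (q/2) ((1-q)/2)) * ‖ρ‖
        ≤ (r/(2*(‖ρ‖+1))) * (‖ρ‖+1) :=
      mul_le_mul hδ2 (by linarith) hN (by positivity)
    have heq : (r/(2*(‖ρ‖+1))) * (‖ρ‖+1) = r/2 := by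
      have hne0 : ‖ρ‖ + 1 ≠ 0 := by positivity
      field_simp
    linarith
  -- case split on the sign of ūA - ūB at q
  rcases lt_or_gt_of_ne hqD with hBA | hAB
  · -- ūA < ūB near q : flow is -x, σ decreases; use mirrored barrier
    have hev : ∀ᶠ y in 𝓝 q, ubar uA y - ubar uB y < 0 :=
      (hDcont.tendsto q).eventually (eventually_lt_nhds (by linarith))
    obtain ⟨ε, hε, hball_ε⟩ := Metric.eventually_nhds_iff.1 hev
    obtain ⟨δ, hδ, hδε, hδr, hδq, hδq1⟩ := hδex ε hε
    set c := q - δ with hc_def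
    have hc : 0 < c := by rw [hc_def]; linarith
    have hband_ae : ∀ᵐ t ∂(volume.restrict (Ici (0:ℝ))),
        T ≤ t → s t ∈ Icc (q-δ) (q+δ) → g t ≤ -c := by
      filter_upwards [hv_ae, ae_restrict_mem measurableSet_Ici] with t htv ht0 hTt hband
      have hwn : ‖w t‖ < r/2 := by
        rw [hwexp t ht0, norm_smul, Real.norm_eq_abs, Real.abs_exp]
        exact hT0 t (le_trans (le_max_left _ _) hTt)
      have hsq : |s t - q| ≤ δ := abs_le.2 ⟨by linarith [hband.1], by linarith [hband.2]⟩
      have hxq : ‖x t - q • ρ‖ < r := by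
        have hdecomp : x t - q • ρ = w t + (s t - q) • ρ := by
          rw [hw_def]; simp only; rw [sub_smul]; abel
        have hn1 : ‖w t + (s t - q) • ρ‖ ≤ ‖w t‖ + ‖(s t - q) • ρ‖ := norm_add_le _ _
        have hn2 : ‖(s t - q) • ρ‖ = |s t - q| * ‖ρ‖ := by
          rw [norm_smul, Real.norm_eq_abs]
        have hn3 : |s t - q| * ‖ρ‖ ≤ δ * ‖ρ‖ :=
          mul_le_mul_of_nonneg_right hsq (norm_nonneg ρ)
        rw [hdecomp]
        linarith
      have hxint : x t ∈ interior (Xs ρ) := mem_interior_Xs (hball_int _ hxq)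
      have hDneg : ubar uA (sigma' (x t)) < ubar uB (sigma' (x t)) := by
        rw [sigma'_eq_Lsum (x t)]
        have := hball_ε (y := s t) (by rw [Real.dist_eq]; linarith [abs_le.1 hsq])
        linarith
      rw [Vmap, if_neg (fun h => absurd h.2 (not_lt.2 hDneg.le)),
        if_pos ⟨hxint, hDneg⟩, mem_singleton_iff] at htv
      have hgt : g t = -(s t) := by
        rw [hg_def]; simp only; rw [htv, map_neg]
      rw [hgt, hc_def]
      have := hband.1
      linarith
    have H2 : ∀ u w', T ≤ u → u ≤ w' →
        (∀ τ ∈ Icc u w', (2*q - s τ) ∈ Icc (q-δ) (q+δ)) →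
        c * (w' - u) ≤ (2*q - s w') - (2*q - s u) := by
      intro u w' hu huw hband
      have h0u : 0 ≤ u := hT0'.trans hu
      have h0w : 0 ≤ w' := h0u.trans huw
      have hg_uw : IntervalIntegrable g volume u w' :=
        (hg_int w' h0w).mono_set
          (by rw [uIcc_of_le huw, uIcc_of_le h0w]; exact Icc_subset_Icc h0u (le_refl _))
      have hae : ∀ᵐ τ ∂(volume.restrict (Icc u w')), c ≤ -(g τ) := by
        have hsub : Icc u w' ⊆ Ici (0:ℝ) := fun τ hτ => h0u.trans hτ.1
        have h1 := ae_restrict_of_ae_restrict_of_subset hsub hband_ae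
        filter_upwards [h1, ae_restrict_mem measurableSet_Icc] with τ h2 h3
        have h4 := hband τ h3
        have h5 : s τ ∈ Icc (q-δ) (q+δ) := ⟨by linarith [h4.2], by linarith [h4.1]⟩
        linarith [h2 (hu.trans h3.1) h5]
      have key := intervalIntegral.integral_mono_ae_restrict huw
        intervalIntegrable_const hg_uw.neg hae
      rw [intervalIntegral.integral_const, smul_eq_mul] at key
      simp only [Pi.neg_apply] at key
      rw [intervalIntegral.integral_neg] at key
      have hsub2 := intervalIntegral.integral_interval_sub_left (hg_int w' h0w) (hg_int u h0u)
      have h5 : s w' - s u = ∫ τ in u..w', g τ := by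
        rw [hs_eq w' h0w, hs_eq u h0u, ← hsub2]; ring
      have h6 : (2*q - s w') - (2*q - s u) = -(s w' - s u) := by ring
      rw [h6, h5]
      calc c * (w' - u) = (w' - u) * c := mul_comm _ _
        _ ≤ -∫ τ in u..w', g τ := key
    have hs'cont : ContinuousOn (fun t => 2*q - s t) (Ici 0) :=
      continuousOn_const.sub hscont
    have hs'conv : Tendsto (fun n => 2*q - s (tn n)) atTop (𝓝 q) := by
      have := tendsto_const_nhds (x := 2*q) (f := atTop (α := ℕ)) |>.sub hsconv
      have heq : 2*q - q = q := by ring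
      rwa [heq] at this
    exact no_recur hδ hc hT0' hs'cont H2 tn htn1 hs'conv
  · -- ūB < ūA near q : flow is ρ - x, σ increases
    have hev : ∀ᶠ y in 𝓝 q, 0 < ubar uA y - ubar uB y :=
      (hDcont.tendsto q).eventually (eventually_gt_nhds (by linarith))
    obtain ⟨ε, hε, hball_ε⟩ := Metric.eventually_nhds_iff.1 hev
    obtain ⟨δ, hδ, hδε, hδr, hδq, hδq1⟩ := hδex ε hε
    set c := 1 - q - δ with hc_def
    have hc : 0 < c := by rw [hc_def]; linarith
    have hband_ae : ∀ᵐ t ∂(volume.restrict (Ici (0:ℝ))),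
        T ≤ t → s t ∈ Icc (q-δ) (q+δ) → c ≤ g t := by
      filter_upwards [hv_ae, ae_restrict_mem measurableSet_Ici] with t htv ht0 hTt hband
      have hwn : ‖w t‖ < r/2 := by
        rw [hwexp t ht0, norm_smul, Real.norm_eq_abs, Real.abs_exp]
        exact hT0 t (le_trans (le_max_left _ _) hTt)
      have hsq : |s t - q| ≤ δ := abs_le.2 ⟨by linarith [hband.1], by linarith [hband.2]⟩
      have hxq : ‖x t - q • ρ‖ < r := by
        have hdecomp : x t - q • ρ = w t + (s t - q) • ρ := by
          rw [hw_def]; simp only; rw [sub_smul]; abel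
        have hn1 : ‖w t + (s t - q) • ρ‖ ≤ ‖w t‖ + ‖(s t - q) • ρ‖ := norm_add_le _ _
        have hn2 : ‖(s t - q) • ρ‖ = |s t - q| * ‖ρ‖ := by
          rw [norm_smul, Real.norm_eq_abs]
        have hn3 : |s t - q| * ‖ρ‖ ≤ δ * ‖ρ‖ :=
          mul_le_mul_of_nonneg_right hsq (norm_nonneg ρ)
        rw [hdecomp]
        linarith
      have hxint : x t ∈ interior (Xs ρ) := mem_interior_Xs (hball_int _ hxq)
      have hDpos : ubar uB (sigma' (x t)) < ubar uA (sigma' (x t)) := by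
        rw [sigma'_eq_Lsum (x t)]
        have := hball_ε (y := s t) (by rw [Real.dist_eq]; linarith [abs_le.1 hsq])
        linarith
      rw [Vmap, if_pos ⟨hxint, hDpos⟩, mem_singleton_iff] at htv
      have hgt : g t = 1 - s t := by
        rw [hg_def]; simp only; rw [htv, map_sub, hLρ]
      rw [hgt, hc_def]
      have := hband.2
      linarith
    have H : ∀ u w', T ≤ u → u ≤ w' →
        (∀ τ ∈ Icc u w', s τ ∈ Icc (q-δ) (q+δ)) →
        c * (w' - u) ≤ s w' - s u := by
      intro u w' hu huw hband
      have h0u : 0 ≤ u := hT0'.trans hu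
      have h0w : 0 ≤ w' := h0u.trans huw
      have hg_uw : IntervalIntegrable g volume u w' :=
        (hg_int w' h0w).mono_set
          (by rw [uIcc_of_le huw, uIcc_of_le h0w]; exact Icc_subset_Icc h0u (le_refl _))
      have hae : ∀ᵐ τ ∂(volume.restrict (Icc u w')), c ≤ g τ := by
        have hsub : Icc u w' ⊆ Ici (0:ℝ) := fun τ hτ => h0u.trans hτ.1
        have h1 := ae_restrict_of_ae_restrict_of_subset hsub hband_ae
        filter_upwards [h1, ae_restrict_mem measurableSet_Icc] with τ h2 h3
        exact h2 (hu.trans h3.1) (hband τ h3)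
      have key := intervalIntegral.integral_mono_ae_restrict huw
        intervalIntegrable_const hg_uw hae
      rw [intervalIntegral.integral_const, smul_eq_mul] at key
      have hsub2 := intervalIntegral.integral_interval_sub_left (hg_int w' h0w) (hg_int u h0u)
      have h5 : s w' - s u = ∫ τ in u..w', g τ := by
        rw [hs_eq w' h0w, hs_eq u h0u, ← hsub2]; ring
      rw [h5]
      calc c * (w' - u) = (w' - u) * c := mul_comm _ _
        _ ≤ ∫ τ in u..w', g τ := key
    exact no_recur hδ hc hT0' hscont H tn htn1 hsconv
theorem birkhoff_center_is_equilibria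
    {p : ℕ} (hp : 0 < p) (ρ : Vec p) (hρ : ∀ i, 0 < ρ i) (hsum : ∑ i, ρ i = 1)
    (uA uB : Fin p → Polynomial ℝ)
    (h0 : ubar uA 0 < ubar uB 0) (h1 : ubar uB 1 < ubar uA 1)
    (hE : (Eset uA uB).Finite)
    (hsc : ∀ q ∈ Eset uA uB, SignChange uA uB q) :
    {x₀ : Vec p | Recurrent ρ uA uB x₀}
        = (fun q : ℝ => q • ρ) '' ({0, 1} ∪ Eset uA uB) ∧
    closure {x₀ : Vec p | Recurrent ρ uA uB x₀}
        = (fun q : ℝ => q • ρ) '' ({0, 1} ∪ Eset uA uB) := by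
  have hmain : {x₀ : Vec p | Recurrent ρ uA uB x₀}
      = (fun q : ℝ => q • ρ) '' ({0, 1} ∪ Eset uA uB) := by
    ext x₀
    simp only [mem_setOf_eq, mem_image]
    constructor
    · intro h
      obtain ⟨q, hq, hqx⟩ := recurrent_eq hp ρ hρ hsum uA uB x₀ h
      exact ⟨q, hq, hqx⟩
    · rintro ⟨q, hq, rfl⟩
      exact equil_recurrent hp ρ hρ hsum uA uB q hq
  refine ⟨hmain, ?_⟩
  rw [hmain]
  apply IsClosed.closure_eq
  apply Set.Finite.isClosed
  exact (((Set.finite_singleton (1:ℝ)).insert 0).union hE).image _
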